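/- Let G be a group, (H, f_H) and (H', f_{H'}) G-groups, and m : H → H' a group homomorphism with m ∘ f_H = f_{H'} (a morphism in the comma category C(G)). Then for every T1-prime ideal P of (H', f_{H'}), the preimage m⁻¹(P) (in Lean: Subgroup.comap m P) is a T1-prime ideal of (H, f_H); in particular m⁻¹(P) ≠ H. -/

import Mathlib

/-- The subgroup `G(x)` of `H` generated by the `G`-conjugates `f g * x * (f g)⁻¹` of `x`. -/
def GConj {G H : Type*} [Group G] [Group H] (f : G →* H) (x : H) : Subgroup H :=
  Subgroup.closure {h : H | ∃ g : G, h = f g * x * (f g)⁻¹}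

/-- `x` is a T1-divisor of zero of the `G`-group `(H, f)`. -/
def IsT1DivisorOfZero {G H : Type*} [Group G] [Group H] (f : G →* H) (x : H) : Prop :=
  x ≠ 1 ∧ ∃ y : H, y ≠ 1 ∧ ⁅GConj f x, GConj f y⁆ = ⊥

/-- `x` is a T2-divisor of zero of the `G`-group `(H, f)`. -/
def IsT2DivisorOfZero {G H : Type*} [Group G] [Group H] (f : G →* H) (x : H) : Prop :=
  x ≠ 1 ∧ ∃ y : H, y ≠ 1 ∧ GConj f x ⊓ GConj f y = ⊥

/-- `I` is a T1-prime ideal of the `G`-group `(H, f)`: a normal subgroup, distinct from `H`,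
such that `⁅G(x), G(y)⁆ ⊆ I` implies `x ∈ I` or `y ∈ I`. -/
def IsT1Prime {G H : Type*} [Group G] [Group H] (f : G →* H) (I : Subgroup H) : Prop :=
  I.Normal ∧ I ≠ ⊤ ∧ ∀ x y : H, ⁅GConj f x, GConj f y⁆ ≤ I → x ∈ I ∨ y ∈ I

/-- `I` is a T2-prime ideal of the `G`-group `(H, f)`: a normal subgroup, distinct from `H`,
such that `G(x) ∩ G(y) ⊆ I` implies `x ∈ I` or `y ∈ I`. -/
def IsT2Prime {G H : Type*} [Group G] [Group H] (f : G →* H) (I : Subgroup H) : Prop :=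
  I.Normal ∧ I ≠ ⊤ ∧ ∀ x y : H, GConj f x ⊓ GConj f y ≤ I → x ∈ I ∨ y ∈ I

/-- The T1-spectrum of the `G`-group `(H, f)`: the type of T1-prime ideals. -/
abbrev Spec1 {G H : Type*} [Group G] [Group H] (f : G →* H) : Type _ :=
  {P : Subgroup H // IsT1Prime f P}

/-- The T2-spectrum of the `G`-group `(H, f)`: the type of T2-prime ideals. -/
abbrev Spec2 {G H : Type*} [Group G] [Group H] (f : G →* H) : Type _ :=
  {P : Subgroup H // IsT2Prime f P}

/-- `V¹_H(I)`: the set of T1-prime ideals containing `I`. -/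
def V1 {G H : Type*} [Group G] [Group H] (f : G →* H) (I : Subgroup H) : Set (Spec1 f) :=
  {P | I ≤ P.val}

/-- `V²_H(I)`: the set of T2-prime ideals containing `I`. -/
def V2 {G H : Type*} [Group G] [Group H] (f : G →* H) (I : Subgroup H) : Set (Spec2 f) :=
  {P | I ≤ P.val}

theorem comap_t1_prime {G H H' : Type*} [Group G] [Group H] [Group H']
    (fH : G →* H) (fH' : G →* H') (m : H →* H') (hm : m.comp fH = fH')
    (P : Subgroup H') (hP : IsT1Prime fH' P) :
    IsT1Prime fH (Subgroup.comap m P) ∧ Subgroup.comap m P ≠ ⊤ := by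
  obtain ⟨hN, hne, hprime⟩ := hP
  haveI := hN
  have hmap : ∀ x : H, Subgroup.map m (GConj fH x) = GConj fH' (m x) := by
    intro x
    rw [GConj, GConj, MonoidHom.map_closure]
    congr 1
    ext h'
    constructor
    · rintro ⟨h, ⟨g, rfl⟩, rfl⟩
      exact ⟨g, by simp [← hm]⟩
    · rintro ⟨g, rfl⟩
      exact ⟨fH g * x * (fH g)⁻¹, ⟨g, rfl⟩, by simp [← hm]⟩
  have hnetop : Subgroup.comap m P ≠ ⊤ := by
    intro htop
    have hf' : ∀ g : G, fH' g ∈ P := by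
      intro g
      have h1 : fH g ∈ Subgroup.comap m P := htop ▸ Subgroup.mem_top _
      have h2 : m (fH g) = fH' g := by rw [← hm]; rfl
      rw [Subgroup.mem_comap, h2] at h1
      exact h1
    obtain ⟨x, hx⟩ : ∃ x : H', x ∉ P := by
      by_contra h
      push_neg at h
      exact hne ((Subgroup.eq_top_iff' P).mpr h)
    set π := QuotientGroup.mk' P with hπ
    have hgen : ∀ z : H', GConj fH' z ≤ Subgroup.comap π (Subgroup.zpowers (π z)) := by
      intro z
      rw [GConj]
      apply Subgroup.closure_le _ |>.mpr
      rintro h ⟨g, rfl⟩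
      have h1 : π (fH' g) = 1 := (QuotientGroup.eq_one_iff _).mpr (hf' g)
      have : π (fH' g * z * (fH' g)⁻¹) = π z := by
        rw [map_mul, map_mul, map_inv, h1, one_mul, inv_one, mul_one]
      exact Subgroup.mem_comap.mpr (this ▸ Subgroup.mem_zpowers _)
    have hcomm : ⁅GConj fH' x, GConj fH' x⁆ ≤ P := by
      rw [Subgroup.commutator_le]
      intro a ha b hb
      obtain ⟨i, hi⟩ := hgen x ha
      obtain ⟨j, hj⟩ := hgen x hb
      apply (QuotientGroup.eq_one_iff _).mp
      open scoped commutatorElement in show π ⁅a, b⁆ = 1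
      have hco : Commute (π a) (π b) := by
        rw [← hi, ← hj]; exact (Commute.refl (π x)).zpow_zpow i j
      rw [map_commutatorElement]
      exact commutatorElement_eq_one_iff_commute.mpr hco
    rcases hprime x x hcomm with h | h <;> exact hx h
  refine ⟨⟨hN.comap m, hnetop, ?_⟩, hnetop⟩
  intro x y hc
  have hc' : ⁅GConj fH' (m x), GConj fH' (m y)⁆ ≤ P := by
    rw [← hmap, ← hmap, ← Subgroup.map_commutator]
    exact Subgroup.map_le_iff_le_comap.mpr hc
  rcases hprime _ _ hc' with h | h
  · exact Or.inl (Subgroup.mem_comap.mpr h)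
  · exact Or.inr (Subgroup.mem_comap.mpr h)
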